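/- Let q be a prime power, k ≥ 3, and a, b, c ∈ F_{q^k} with b ≠ a^q and c ≠ a·b. Then the substitution X ↦ ((a·b - c)/(b - a^q))·X - a transforms the polynomial X^{q+1} + a·X^q + b·X + c into a nonzero scalar multiple of X^{q+1} - B·X + B, where B = (b - a^q)^{q+1}/(c - a·b)^q. Consequently, X^{q+1} + a·X^q + b·X + c splits completely over F_{q^k} if and only if X^{q+1} - B·X + B does. -/

import Mathlib

open Polynomial

/-- **Transformation to a Bluher polynomial.** Let `q = p^m` be a prime power, `k ≥ 3`, and
`F` the field with `q^k` elements (of characteristic `p`).  Let `a, b, c ∈ F` with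
`b ≠ a^q` and `c ≠ a·b`.  Then the substitution `X ↦ λ·X - a`, where
`λ = (a·b - c)/(b - a^q)`, transforms `X^(q+1) + a·X^q + b·X + c` into a nonzero scalar
multiple of `X^(q+1) - B·X + B`, where `B = (b - a^q)^(q+1)/(c - a·b)^q`.  Consequently,
`X^(q+1) + a·X^q + b·X + c` splits completely over `F` iff `X^(q+1) - B·X + B` does. -/
theorem transform_to_bluher (p m q k : ℕ) (hp : p.Prime) (hm : 0 < m) (hq : q = p ^ m)
    (hk : 3 ≤ k) (F : Type*) [Field F] [Fintype F] [CharP F p]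
    (hF : Fintype.card F = q ^ k)
    (a b c : F) (hb : b ≠ a ^ q) (hc : c ≠ a * b) :
    ∃ μ : F, μ ≠ 0 ∧
      (X ^ (q + 1) + C a * X ^ q + C b * X + C c : Polynomial F).comp
          (C ((a * b - c) / (b - a ^ q)) * X - C a)
        = C μ * (X ^ (q + 1) - C ((b - a ^ q) ^ (q + 1) / (c - a * b) ^ q) * X
            + C ((b - a ^ q) ^ (q + 1) / (c - a * b) ^ q)) ∧
      (((X ^ (q + 1) + C a * X ^ q + C b * X + C c : Polynomial F).map (RingHom.id F)).Splits ↔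
        ((X ^ (q + 1) - C ((b - a ^ q) ^ (q + 1) / (c - a * b) ^ q) * X
            + C ((b - a ^ q) ^ (q + 1) / (c - a * b) ^ q) : Polynomial F).map
          (RingHom.id F)).Splits) := by
  haveI : Fact p.Prime := ⟨hp⟩
  set l : F := (a * b - c) / (b - a ^ q) with hl
  set B : F := (b - a ^ q) ^ (q + 1) / (c - a * b) ^ q with hB
  have hba : b - a ^ q ≠ 0 := sub_ne_zero.mpr hb
  have hcab : c - a * b ≠ 0 := sub_ne_zero.mpr hc
  have habc : a * b - c ≠ 0 := fun h => hcab (by linear_combination -h)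
  have hlne : l ≠ 0 := div_ne_zero habc hba
  have hμ : l ^ (q + 1) ≠ 0 := pow_ne_zero _ hlne
  have hq0 : q ≠ 0 := by rw [hq]; exact pow_ne_zero _ hp.ne_zero
  have hnegq : ∀ x : F, (-x) ^ q = -(x ^ q) := by
    intro x
    rw [hq, show (-x : F) = 0 - x by ring, sub_pow_char_pow, zero_pow (hq ▸ hq0), zero_sub]
  have hneg : (a * b - c) ^ (q + 1) = (c - a * b) ^ (q + 1) := by
    have h1 : (a * b - c) = -(c - a * b) := by ring
    rw [h1, pow_succ, pow_succ, hnegq]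
    ring
  have hlval : l * (b - a ^ q) = a * b - c := div_mul_cancel₀ _ hba
  have hμB : l ^ (q + 1) * B = c - a * b := by
    rw [hl, hB, div_pow, div_mul_div_comm, hneg,
      div_eq_iff (mul_ne_zero (pow_ne_zero _ hba) (pow_ne_zero _ hcab)),
      pow_succ (c - a * b)]
    ring
  have hcomp : (X ^ (q + 1) + C a * X ^ q + C b * X + C c : Polynomial F).comp
      (C l * X - C a) = C (l ^ (q + 1)) * (X ^ (q + 1) - C B * X + C B) := by
    have hfrob : (C l * X - C a : Polynomial F) ^ q
        = C (l ^ q) * X ^ q - C (a ^ q) := by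
      rw [hq, sub_pow_char_pow, mul_pow, ← C_pow, ← C_pow]
    have hσ : (C l * X - C a : Polynomial F) ^ (q + 1)
        = ((C l * X - C a) ^ q) * (C l * X - C a) := by rw [pow_succ]
    have hX : (X : Polynomial F) ^ (q + 1) = X ^ q * X := by rw [pow_succ]
    simp only [add_comp, mul_comp, pow_comp, X_comp, C_comp]
    rw [hσ, hfrob, hX]
    have P1 : (C (l ^ q) * C l : Polynomial F) = C (l ^ (q + 1)) := by
      rw [← C_mul, ← pow_succ]
    have P2 : (C b * C l - C (a ^ q) * C l : Polynomial F)
        = -(C (l ^ (q + 1)) * C B) := by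
      simp only [← C_mul, ← C_sub, ← C_neg]
      exact congrArg C (by linear_combination hlval + hμB)
    have P3 : (C c - C a * C b : Polynomial F) = C (l ^ (q + 1)) * C B := by
      simp only [← C_mul, ← C_sub]
      exact congrArg C (by linear_combination -hμB)
    linear_combination (X ^ q * X) * P1 + X * P2 + P3
  refine ⟨l ^ (q + 1), hμ, hcomp, ?_⟩
  have hdeg : ((C l * X - C a : Polynomial F).map (RingHom.id F)).degree = 1 := by
    rw [Polynomial.map_id, show (C l * X - C a : Polynomial F) = C l * X + C (-a) by
      rw [C_neg]; ring]
    exact degree_linear hlne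
  simp only [Polynomial.map_id]
  rw [splits_iff_comp_splits_of_degree_eq_one (by rwa [Polynomial.map_id] at hdeg), hcomp]
  have hg : (X ^ (q + 1) - C B * X + C B : Polynomial F) ≠ 0 := by
    intro h
    have h2 := congrArg (fun P => P.coeff (q + 1)) h
    simp [coeff_X_pow, coeff_C, Nat.succ_ne_zero, hq0] at h2
  rw [splits_mul (C_ne_zero.mpr hμ) hg]
  exact ⟨fun h => h.2, fun h => ⟨Splits.C _, h⟩⟩
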